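/- Fix reals β' > 0, γ' ≥ 0, γ > 0, and for n ≥ 0 define S_n = Σ_{k=0}^{n} (β'/(β'+γ))^k · Γ(k+1+γ'/β') / (k!·(n-k)!) · (γ/(β'+γ))^{n-k}. Then for all n ≥ 1, S_n ≥ (β'/(β'+γ))·S_{n-1}. -/
import Mathlib


theorem stmt_8 (β' γ' γ : ℝ) (hβ' : 0 < β') (hγ' : 0 ≤ γ') (hγ : 0 < γ)
    (S : ℕ → ℝ)
    (hS : ∀ n : ℕ, S n = ∑ k ∈ Finset.range (n + 1),
      (β' / (β' + γ)) ^ k * Real.Gamma (k + 1 + γ' / β')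
        / (k.factorial * (n - k).factorial) * (γ / (β' + γ)) ^ (n - k)) :
    ∀ n : ℕ, 1 ≤ n → S n ≥ (β' / (β' + γ)) * S (n - 1) := by
  have hbg : 0 < β' + γ := by linarith
  set p : ℝ := β' / (β' + γ) with hp
  set q : ℝ := γ / (β' + γ) with hq
  set a : ℝ := γ' / β' with ha
  have hp0 : 0 < p := div_pos hβ' hbg
  have hq0 : 0 < q := div_pos hγ hbg
  have ha0 : 0 ≤ a := div_nonneg hγ' hβ'.le
  clear_value p q a
  rintro (_ | m) hn
  · omega
  simp only [Nat.succ_sub_one]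
  rw [hS, hS, Finset.mul_sum, Finset.sum_range_succ']
  have key : ∀ k ∈ Finset.range (m + 1),
      p * (p ^ k * Real.Gamma (k + 1 + a) / (k.factorial * (m - k).factorial) * q ^ (m - k))
      ≤ p ^ (k + 1) * Real.Gamma (↑(k + 1) + 1 + a)
          / ((k + 1).factorial * (m + 1 - (k + 1)).factorial) * q ^ (m + 1 - (k + 1)) := by
    intro k _
    have hms : m + 1 - (k + 1) = m - k := by omega
    rw [hms]
    have hΓpos : 0 < Real.Gamma ((k : ℝ) + 1 + a) :=
      Real.Gamma_pos_of_pos (by positivity)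
    have hΓ : Real.Gamma (↑(k + 1) + 1 + a) = ((k : ℝ) + 1 + a) * Real.Gamma ((k : ℝ) + 1 + a) := by
      have : (↑(k + 1) : ℝ) + 1 + a = ((k : ℝ) + 1 + a) + 1 := by push_cast; ring
      rw [this, Real.Gamma_add_one (by positivity)]
    rw [hΓ]
    have hfact : ((k + 1).factorial : ℝ) = ((k : ℝ) + 1) * k.factorial := by
      rw [Nat.factorial_succ]; push_cast; ring
    rw [hfact]
    have hk0 : (0:ℝ) < (k.factorial : ℝ) := by positivity
    have hmk0 : (0:ℝ) < ((m - k).factorial : ℝ) := by positivity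
    rw [div_mul_eq_mul_div, div_mul_eq_mul_div, ← mul_div_assoc,
      div_le_div_iff₀ (by positivity) (by positivity), pow_succ]
    nlinarith [mul_nonneg (mul_nonneg (mul_nonneg (mul_nonneg (mul_nonneg ha0
      (mul_pos (pow_pos hp0 k) hp0).le) hΓpos.le) (pow_pos hq0 (m - k)).le) hk0.le) hmk0.le]
  have h0 : 0 ≤ p ^ 0 * Real.Gamma (↑(0:ℕ) + 1 + a)
      / ((0:ℕ).factorial * (m + 1 - 0).factorial) * q ^ (m + 1 - 0) := by
    have : 0 < Real.Gamma ((0:ℕ) + 1 + a) := Real.Gamma_pos_of_pos (by positivity)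
    positivity
  exact le_add_of_le_of_nonneg (Finset.sum_le_sum key) h0
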